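/- In the OPT setup, consider the sparsity pattern S_{X_{W*}} (rows restricted to X_{W*}) with the matching M_p. Then there exists no augmenting path with respect to M_p starting from any row j ∈ J; that is, there is no sequence j = i_0, c_1, i_1, c_2, …, i_{k−1}, c_k of distinct rows i_t ∈ X_{W*} and distinct columns c_t such that (i_{t−1}, c_t) ∈ S for all 1 ≤ t ≤ k, (i_t, c_t) ∈ M_p for all 1 ≤ t ≤ k−1, and the final column c_k is not matched by M_p. -/
import Mathlib


open Matrix MeasureTheory

/-- `A` has sparsity pattern `S`: the nonzero entries of `A` are exactly those indexed by `S`. -/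
def HasPattern {m n : ℕ} (S : Finset (Fin m × Fin n)) (A : Matrix (Fin m) (Fin n) ℝ) : Prop :=
  ∀ i j, A i j ≠ 0 ↔ (i, j) ∈ S

/-- Generic rank of the class of matrices with sparsity pattern `S`. -/
noncomputable def sprank {m n : ℕ} (S : Finset (Fin m × Fin n)) : ℕ :=
  sSup {r : ℕ | ∃ A : Matrix (Fin m) (Fin n) ℝ, HasPattern S A ∧ A.rank = r}

/-- The sparsity pattern restricted to the rows in `T` (rows outside `T` become zero). -/
def patternOn {m n : ℕ} (S : Finset (Fin m × Fin n)) (T : Finset (Fin m)) :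
    Finset (Fin m × Fin n) :=
  S.filter (fun p => p.1 ∈ T)

/-- A matching of a sparsity pattern: any two distinct pairs differ in both coordinates. -/
def IsMatching {m n : ℕ} (M : Finset (Fin m × Fin n)) : Prop :=
  ∀ p ∈ M, ∀ q ∈ M, p ≠ q → p.1 ≠ q.1 ∧ p.2 ≠ q.2

/-- `nu S` : maximum cardinality of a matching contained in `S`. -/
noncomputable def nu {m n : ℕ} (S : Finset (Fin m × Fin n)) : ℕ :=
  sSup {k : ℕ | ∃ M ⊆ S, IsMatching M ∧ M.card = k}

/-- ℓ₀ "norm": number of nonzero entries of a vector. -/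
noncomputable def l0 {m : ℕ} (y : Fin m → ℝ) : ℕ :=
  (Finset.univ.filter (fun i => y i ≠ 0)).card

/-- `cospark A` : minimum of `‖A x‖₀` over nonzero `x`. -/
noncomputable def cospark {m n : ℕ} (A : Matrix (Fin m) (Fin n) ℝ) : ℕ :=
  sInf {k : ℕ | ∃ x : Fin n → ℝ, x ≠ 0 ∧ l0 (A.mulVec x) = k}

/-- Generic cospark of the class of matrices with sparsity pattern `S`. -/
noncomputable def spcospark {m n : ℕ} (S : Finset (Fin m × Fin n)) : ℕ :=
  sSup {k : ℕ | ∃ A : Matrix (Fin m) (Fin n) ℝ, HasPattern S A ∧ cospark A = k}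

/-- The row-submatrix `A_T`, realized as `A` with the rows outside `T` zeroed out. -/
noncomputable def rowRestrict {m n : ℕ} (A : Matrix (Fin m) (Fin n) ℝ) (T : Finset (Fin m)) :
    Matrix (Fin m) (Fin n) ℝ :=
  Matrix.of fun i j => if i ∈ T then A i j else 0

/-- `X_W` : the rows of the pattern `S` all of whose nonzero positions lie in the columns `W`. -/
def rowsIn {m n : ℕ} (S : Finset (Fin m × Fin n)) (W : Finset (Fin n)) : Finset (Fin m) :=
  Finset.univ.filter (fun i => ∀ j, (i, j) ∈ S → j ∈ W)

/-- in the OPT setup, with `M_p = {(i,k) ∈ M : i ∈ X_{W*}}`, there is no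
augmenting path with respect to `M_p` (within the rows `X_{W*}`) starting from any row
`j ∈ J`.  A path `j = i₀, c₁, i₁, …, i_{k-1}, c_k` is encoded by `r t = i_t` and
`c t = c_{t+1}` for `t = 0, …, k-1`. -/
theorem stmt10 {m n : ℕ} (hn : 1 ≤ n) (hmn : n < m) (S : Finset (Fin m × Fin n))
    (hspr : sprank S = n)
    (OPT : Finset (Fin m)) (hOPT : nu (patternOn S OPT) = n - 1)
    (hmax : ∀ T : Finset (Fin m), nu (patternOn S T) = n - 1 → T.card ≤ OPT.card)
    (M : Finset (Fin m × Fin n)) (hMsub : M ⊆ patternOn S OPT)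
    (hM : IsMatching M) (hMcard : M.card = n - 1)
    (I : Finset (Fin m)) (hI : I = M.image Prod.fst)
    (J : Finset (Fin m)) (hJ : J = OPT \ I) (hJne : J.Nonempty)
    (W : Finset (Fin n)) (hW : W = M.image Prod.snd)
    (v : Fin n) (hv : v ∉ W)
    (Mp : Finset (Fin m × Fin n)) (hMp : Mp = M.filter (fun p => p.1 ∈ rowsIn S W)) :
    ∀ j ∈ J, ¬ ∃ (k : ℕ) (hk : 0 < k) (r : Fin k → Fin m) (c : Fin k → Fin n),
      r ⟨0, hk⟩ = j ∧
      Function.Injective r ∧ Function.Injective c ∧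
      (∀ t, r t ∈ rowsIn S W) ∧
      (∀ t, (r t, c t) ∈ S) ∧
      (∀ t : Fin k, ∀ ht : t.val + 1 < k, (r ⟨t.val + 1, ht⟩, c t) ∈ Mp) ∧
      (∀ i : Fin m, (i, c ⟨k - 1, Nat.sub_lt hk Nat.one_pos⟩) ∉ Mp) := by
  
  classical
  intro j hj
  rintro ⟨k, hk, r, c, hr0, hrinj, hcinj, hrX, hrcS, hpath, hlast⟩
  have hMS : ∀ p ∈ M, p ∈ S := fun p hp => (Finset.mem_filter.mp (hMsub hp)).1
  have hMOPT : ∀ p ∈ M, p.1 ∈ OPT := fun p hp => (Finset.mem_filter.mp (hMsub hp)).2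
  have hMW : ∀ p ∈ M, p.2 ∈ W := by
    intro p hp; rw [hW]; exact Finset.mem_image.mpr ⟨p, hp, rfl⟩
  have hrowU : ∀ p ∈ M, ∀ q ∈ M, p.1 = q.1 → p = q := by
    intro p hp q hq h; by_contra hne; exact (hM p hp q hq hne).1 h
  have hcolU : ∀ p ∈ M, ∀ q ∈ M, p.2 = q.2 → p = q := by
    intro p hp q hq h; by_contra hne; exact (hM p hp q hq hne).2 h
  have hcW : ∀ t, c t ∈ W := by
    intro t
    have h := hrX t
    simp only [rowsIn, Finset.mem_filter] at h
    exact h.2 (c t) (hrcS t)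
  set tl : Fin k := ⟨k - 1, Nat.sub_lt hk Nat.one_pos⟩ with htl
  -- the M-partner of the last column
  obtain ⟨p0, hp0M, hp0c⟩ := Finset.mem_image.mp (hW ▸ hcW tl)
  set i0 : Fin m := p0.1 with hi0
  have hpair : (i0, c tl) ∈ M := by
    have : p0 = (i0, c tl) := by rw [hi0, ← hp0c]
    rw [← this]; exact hp0M
  have hi0X : i0 ∉ rowsIn S W := by
    intro h
    exact hlast i0 (by rw [hMp]; exact Finset.mem_filter.mpr ⟨hpair, h⟩)
  obtain ⟨u, huS, huW⟩ : ∃ u, (i0, u) ∈ S ∧ u ∉ W := by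
    by_contra h
    push_neg at h
    exact hi0X (Finset.mem_filter.mpr ⟨Finset.mem_univ _, fun j' hj' => h j' hj'⟩)
  have hWcard : W.card = n - 1 := by
    rw [hW, Finset.card_image_of_injOn, hMcard]
    intro p hp q hq hpq
    exact hcolU p hp q hq hpq
  have hWc : Wᶜ.card = 1 := by
    rw [Finset.card_compl, hWcard]
    simp only [Fintype.card_fin]
    omega
  have huv : u = v := by
    have h1 := Finset.card_le_one.mp (le_of_eq hWc)
    exact h1 u (Finset.mem_compl.mpr huW) v (Finset.mem_compl.mpr hv)
  -- previous matching edge of each non-initial path row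
  have hprev : ∀ t : Fin k, 0 < t.val →
      (r t, c ⟨t.val - 1, by omega⟩) ∈ M := by
    intro t ht
    have ht1 : (t.val - 1) + 1 < k := by omega
    have h := hpath ⟨t.val - 1, by omega⟩ ht1
    have heq : (⟨(t.val - 1) + 1, ht1⟩ : Fin k) = t := Fin.ext (by simp; omega)
    rw [heq, hMp] at h
    exact (Finset.mem_filter.mp h).1
  have hr0' : ∀ t : Fin k, t.val = 0 → r t = j := by
    intro t ht
    have : t = ⟨0, hk⟩ := Fin.ext ht
    rw [this, hr0]
  have hjI : j ∉ I := (Finset.mem_sdiff.mp (hJ ▸ hj)).2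
  have hrOPT : ∀ t, r t ∈ OPT := by
    intro t
    rcases Nat.eq_zero_or_pos t.val with h0 | hpos
    · rw [hr0' t h0]; exact (Finset.mem_sdiff.mp (hJ ▸ hj)).1
    · exact hMOPT _ (hprev t hpos)
  -- key facts for injectivity
  have F1 : ∀ q ∈ M, (∀ t, q.2 ≠ c t) → ∀ t, q.1 ≠ r t := by
    intro q hq hqc t hqr
    rcases Nat.eq_zero_or_pos t.val with h0 | hpos
    · rw [hr0' t h0] at hqr
      exact hjI (hI ▸ Finset.mem_image.mpr ⟨q, hq, hqr⟩)
    · have := hrowU q hq _ (hprev t hpos) hqr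
      exact hqc _ (by rw [this])
  have F2 : ∀ q ∈ M, (∀ t, q.2 ≠ c t) → q.1 ≠ i0 := by
    intro q hq hqc hqi
    have := hrowU q hq _ hpair hqi
    exact hqc tl (by rw [this])
  have F3 : ∀ t, r t ≠ i0 := fun t h => hi0X (h ▸ hrX t)
  -- the augmented matching
  set M0 : Finset (Fin m × Fin n) := M.filter (fun p => ∀ t, p.2 ≠ c t) with hM0
  set P : Finset (Fin m × Fin n) := Finset.univ.image (fun t : Fin k => (r t, c t)) with hPdef
  set M2 : Finset (Fin m × Fin n) := (M0 ∪ P) ∪ {(i0, v)} with hM2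
  have hPmem : ∀ q ∈ P, ∃ t : Fin k, q = (r t, c t) := by
    intro q hq
    obtain ⟨t, _, ht⟩ := Finset.mem_image.mp hq
    exact ⟨t, ht.symm⟩
  -- cardinalities
  have hex : ∀ t : Fin k, ∃ p, p ∈ M ∧ p.2 = c t := by
    intro t
    obtain ⟨q, hqM, hqc⟩ := Finset.mem_image.mp (hW ▸ hcW t)
    exact ⟨q, hqM, hqc⟩
  choose f hfM hfc using hex
  have hfilter : M.filter (fun p => ¬ ∀ t, p.2 ≠ c t) = Finset.univ.image f := by
    ext q
    simp only [Finset.mem_filter, Finset.mem_image, Finset.mem_univ, true_and, not_forall,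
      not_not]
    constructor
    · rintro ⟨hqM, t, hqc⟩
      exact ⟨t, hcolU _ (hfM t) q hqM (by rw [hfc t, hqc])⟩
    · rintro ⟨t, rfl⟩
      exact ⟨hfM t, t, hfc t⟩
  have hfinj : Function.Injective f := by
    intro a b hab
    exact hcinj (by rw [← hfc a, ← hfc b, hab])
  have hfiltercard : (M.filter (fun p => ¬ ∀ t, p.2 ≠ c t)).card = k := by
    rw [hfilter, Finset.card_image_of_injective _ hfinj, Finset.card_univ, Fintype.card_fin]
  have himsub : Finset.univ.image f ⊆ M := by
    rw [← hfilter]; exact Finset.filter_subset _ _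
  have himcard : (Finset.univ.image f).card = k := by
    rw [Finset.card_image_of_injective _ hfinj, Finset.card_univ, Fintype.card_fin]
  have hM0eq : M0 = M \ Finset.univ.image f := by
    rw [← hfilter, hM0]
    ext q
    simp only [Finset.mem_filter, Finset.mem_sdiff, not_and, not_not, not_forall, not_exists]
    constructor
    · rintro ⟨h1, h2⟩
      exact ⟨h1, fun _ t hqc => h2 t hqc⟩
    · rintro ⟨h1, h2⟩
      exact ⟨h1, fun t hqc => h2 h1 t hqc⟩
  have hkle : k ≤ n - 1 := by
    rw [← himcard, ← hMcard]; exact Finset.card_le_card himsub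
  have hM0card : M0.card + k = n - 1 := by
    rw [hM0eq, Finset.card_sdiff_of_subset himsub, himcard, hMcard]
    omega
  have hPcard : P.card = k := by
    rw [hPdef, Finset.card_image_of_injective _ (fun a b h => hrinj (congrArg Prod.fst h)),
      Finset.card_univ, Fintype.card_fin]
  have hd1 : Disjoint M0 P := by
    rw [Finset.disjoint_left]
    intro q hq hqP
    obtain ⟨t, rfl⟩ := hPmem q hqP
    exact (Finset.mem_filter.mp hq).2 t rfl
  have hd2 : Disjoint (M0 ∪ P) {(i0, v)} := by
    rw [Finset.disjoint_right]
    intro q hq hq2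
    rw [Finset.mem_singleton] at hq
    rcases Finset.mem_union.mp hq2 with h | h
    · have := hMW _ (Finset.mem_filter.mp h).1
      rw [hq] at this
      exact hv this
    · obtain ⟨t, ht⟩ := hPmem q h
      rw [hq] at ht
      have : v = c t := congrArg Prod.snd ht
      exact hv (this ▸ hcW t)
  have hM2card : M2.card = n := by
    rw [hM2, Finset.card_union_of_disjoint hd2, Finset.card_union_of_disjoint hd1,
      Finset.card_singleton, hPcard]
    omega
  -- M2 is a matching
  have hrowU2 : ∀ p ∈ M2, ∀ q ∈ M2, p.1 = q.1 → p = q := by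
    intro p hp q hq h
    rw [hM2] at hp hq
    simp only [Finset.mem_union, Finset.mem_singleton] at hp hq
    rcases hp with (hp | hp) | hp <;> rcases hq with (hq | hq) | hq
    · exact hrowU p (Finset.mem_filter.mp hp).1 q (Finset.mem_filter.mp hq).1 h
    · obtain ⟨t, rfl⟩ := hPmem q hq
      exact absurd h (F1 p (Finset.mem_filter.mp hp).1 (Finset.mem_filter.mp hp).2 t)
    · subst hq
      exact absurd h (F2 p (Finset.mem_filter.mp hp).1 (Finset.mem_filter.mp hp).2)
    · obtain ⟨t, rfl⟩ := hPmem p hp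
      exact absurd h.symm (F1 q (Finset.mem_filter.mp hq).1 (Finset.mem_filter.mp hq).2 t)
    · obtain ⟨t, rfl⟩ := hPmem p hp
      obtain ⟨t', rfl⟩ := hPmem q hq
      have : t = t' := hrinj h
      rw [this]
    · subst hq
      obtain ⟨t, rfl⟩ := hPmem p hp
      exact absurd h (F3 t)
    · subst hp
      exact absurd h.symm (F2 q (Finset.mem_filter.mp hq).1 (Finset.mem_filter.mp hq).2)
    · subst hp
      obtain ⟨t, rfl⟩ := hPmem q hq
      exact absurd h.symm (F3 t)
    · rw [hp, hq]
  have hcolU2 : ∀ p ∈ M2, ∀ q ∈ M2, p.2 = q.2 → p = q := by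
    intro p hp q hq h
    rw [hM2] at hp hq
    simp only [Finset.mem_union, Finset.mem_singleton] at hp hq
    rcases hp with (hp | hp) | hp <;> rcases hq with (hq | hq) | hq
    · exact hcolU p (Finset.mem_filter.mp hp).1 q (Finset.mem_filter.mp hq).1 h
    · obtain ⟨t, rfl⟩ := hPmem q hq
      exact absurd h ((Finset.mem_filter.mp hp).2 t)
    · subst hq
      have h' : p.2 = v := h
      have hw := hMW p (Finset.mem_filter.mp hp).1
      rw [h'] at hw
      exact absurd hw hv
    · obtain ⟨t, rfl⟩ := hPmem p hp
      exact absurd h.symm ((Finset.mem_filter.mp hq).2 t)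
    · obtain ⟨t, rfl⟩ := hPmem p hp
      obtain ⟨t', rfl⟩ := hPmem q hq
      have : t = t' := hcinj h
      rw [this]
    · subst hq
      obtain ⟨t, rfl⟩ := hPmem p hp
      have h' : c t = v := h
      exact absurd (h' ▸ hcW t) hv
    · subst hp
      have h' : q.2 = v := h.symm
      have hw := hMW q (Finset.mem_filter.mp hq).1
      rw [h'] at hw
      exact absurd hw hv
    · subst hp
      obtain ⟨t, rfl⟩ := hPmem q hq
      have h' : c t = v := h.symm
      exact absurd (h' ▸ hcW t) hv
    · rw [hp, hq]
  have hM2match : IsMatching M2 := by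
    intro p hp q hq hne
    constructor
    · intro h; exact hne (hrowU2 p hp q hq h)
    · intro h; exact hne (hcolU2 p hp q hq h)
  -- M2 ⊆ patternOn S OPT
  have hM2sub : M2 ⊆ patternOn S OPT := by
    intro q hq
    rw [hM2] at hq
    simp only [Finset.mem_union, Finset.mem_singleton] at hq
    rcases hq with (hq | hq) | hq
    · exact hMsub (Finset.mem_filter.mp hq).1
    · obtain ⟨t, rfl⟩ := hPmem q hq
      exact Finset.mem_filter.mpr ⟨hrcS t, hrOPT t⟩
    · subst hq
      exact Finset.mem_filter.mpr ⟨huv ▸ huS, hMOPT (i0, c tl) hpair⟩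
  -- contradiction with nu = n - 1
  have hle : n ≤ nu (patternOn S OPT) := by
    apply le_csSup
    · refine ⟨(patternOn S OPT).card, ?_⟩
      rintro x ⟨N, hNsub, _, rfl⟩
      exact Finset.card_le_card hNsub
    · exact ⟨M2, hM2sub, hM2match, hM2card⟩
  rw [hOPT] at hle
  omega
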